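/- Let f : ℂ → ℂ be entire, let a, b ∈ ℝ and z ∈ ℂ. Then the series ∑_{k=0}^∞ (a^k · sin(b + kπ/2) / k!) · f^{(k)}(z) converges, with sum (1/(2i))·(e^{ib}·f(z + ia) - e^{-ib}·f(z - ia)); i.e., HasSum (fun k => (a^k * sin(b + k*π/2) / k!) * f^{(k)}(z)) ((e^{ib} * f(z + a*I) - e^{-ib} * f(z - a*I)) / (2*I)). -/

import Mathlib

open Complex Real

lemma exp_half_pi_I : Complex.exp ((Real.pi/2 : ℂ) * Complex.I) = Complex.I := by
  simp [Complex.exp_mul_I]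

lemma exp_k_half_pi_I (k : ℕ) :
    Complex.exp ((k * Real.pi / 2 : ℂ) * Complex.I) = Complex.I ^ k := by
  have : ((k : ℂ) * Real.pi / 2) * Complex.I = k * ((Real.pi/2 : ℂ) * Complex.I) := by ring
  rw [this, Complex.exp_nat_mul, exp_half_pi_I]

theorem sin_operator (f : ℂ → ℂ) (hf : Differentiable ℂ f) (a b : ℝ) (z : ℂ) :
    HasSum
      (fun k : ℕ => ((a ^ k * Real.sin (b + k * Real.pi / 2) / (Nat.factorial k) : ℝ) : ℂ)
        * iteratedDeriv k f z)
      ((Complex.exp (b * Complex.I) * f (z + a * Complex.I)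
        - Complex.exp (-(b * Complex.I)) * f (z - a * Complex.I)) / (2 * Complex.I)) := by
  have h1 := (Complex.hasSum_taylorSeries_of_entire hf z (z + a * Complex.I)).mul_left
    (Complex.exp (b * Complex.I))
  have h2 := (Complex.hasSum_taylorSeries_of_entire hf z (z - a * Complex.I)).mul_left
    (Complex.exp (-(b * Complex.I)))
  have h := (h1.sub h2).div_const (2 * Complex.I)
  convert h using 1
  · rfl
  funext k
  have hsin : Complex.sin ((b : ℂ) + k * (Real.pi : ℂ) / 2)
      = (Complex.exp (-((b : ℂ) + k * Real.pi / 2) * Complex.I)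
        - Complex.exp (((b : ℂ) + k * Real.pi / 2) * Complex.I)) * Complex.I / 2 := by
    linear_combination (Complex.two_sin ((b : ℂ) + k * Real.pi / 2)) / 2
  have e1 : Complex.exp (((b : ℂ) + k * Real.pi / 2) * Complex.I)
      = Complex.exp (b * Complex.I) * Complex.I ^ k := by
    rw [add_mul, Complex.exp_add, exp_k_half_pi_I]
  have e2 : Complex.exp (-((b : ℂ) + k * Real.pi / 2) * Complex.I)
      = Complex.exp (-(b * Complex.I)) * (-Complex.I) ^ k := by
    have : (-((b : ℂ) + k * Real.pi / 2)) * Complex.I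
        = -(b * Complex.I) + k * (-((Real.pi/2 : ℂ) * Complex.I)) := by ring
    rw [this, Complex.exp_add, Complex.exp_nat_mul]
    simp only [Complex.exp_neg, exp_half_pi_I, inv_I]
  push_cast
  rw [hsin, e1, e2]
  simp only [smul_eq_mul, sub_smul, add_sub_cancel_left]
  have hsub : z - a * Complex.I - z = (-a : ℂ) * Complex.I := by ring
  rw [hsub]
  have hk : (k.factorial : ℂ) ≠ 0 := by exact_mod_cast k.factorial_ne_zero
  have hI : Complex.I ≠ 0 := Complex.I_ne_zero
  field_simp
  ring_nf
  rw [Complex.I_sq]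
  ring
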